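/- On n qubits, the expected output of magic state rounding damps every Pauli-string expectation by 1/3 per non-identity tensor factor: for every n ∈ ℕ, every matrix ρ indexed by (Fin n → Fin 2), and every Pauli string P : Fin n → Fin 4, it holds that tr(T_P · R(ρ)) = (1/3)^{w(P)} · tr(T_P · ρ), where w(P) = |{q : P(q) ≠ 0}| is the weight of the string. -/

import Mathlib

set_option maxHeartbeats 1000000


open Matrix

/-- The Pauli `X` matrix. -/
noncomputable def PX : Matrix (Fin 2) (Fin 2) ℂ := !![0, 1; 1, 0]

/-- The Pauli `Y` matrix. -/
noncomputable def PY : Matrix (Fin 2) (Fin 2) ℂ := !![0, -Complex.I; Complex.I, 0]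

/-- The Pauli `Z` matrix. -/
noncomputable def PZ : Matrix (Fin 2) (Fin 2) ℂ := !![1, 0; 0, -1]

/-- The four single-qubit Pauli matrices `p₀ = I, p₁ = X, p₂ = Y, p₃ = Z`. -/
noncomputable def pauli : Fin 4 → Matrix (Fin 2) (Fin 2) ℂ :=
  ![(1 : Matrix (Fin 2) (Fin 2) ℂ), PX, PY, PZ]

/-- The single-qubit magic state `μ_u` for `u ∈ {−1,1}³`. -/
noncomputable def magic (u : Fin 3 → ℝ) : Matrix (Fin 2) (Fin 2) ℂ :=
  (1 / 2 : ℂ) • ((1 : Matrix (Fin 2) (Fin 2) ℂ) +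
    (1 / (Real.sqrt 3 : ℂ)) • ((u 0 : ℂ) • PX + (u 1 : ℂ) • PY + (u 2 : ℂ) • PZ))

/-- `±1`-valued sign of a Boolean, used to enumerate `{−1,1}³` by `Fin 3 → Bool`. -/
noncomputable def bsign (b : Bool) : ℝ := if b then 1 else -1

/-- The `n`-qubit Pauli-string operator `T_P` of a string `P : Fin n → Fin 4`. -/
noncomputable def pauliString (n : ℕ) (P : Fin n → Fin 4) :
    Matrix (Fin n → Fin 2) (Fin n → Fin 2) ℂ :=
  Matrix.of fun x y => ∏ q, pauli (P q) (x q) (y q)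

/-- The `n`-qubit tensor product of magic states `M_u` for `u : Fin n → {−1,1}³`. -/
noncomputable def magicProd (n : ℕ) (u : Fin n → Fin 3 → Bool) :
    Matrix (Fin n → Fin 2) (Fin n → Fin 2) ℂ :=
  Matrix.of fun x y => ∏ q, magic (fun i => bsign (u q i)) (x q) (y q)

/-- The expected magic-state-rounding channel on `n` qubits:
`R(ρ) = (1/4ⁿ)·Σ_u tr(M_u·ρ)·M_u`. -/
noncomputable def roundCh (n : ℕ) (ρ : Matrix (Fin n → Fin 2) (Fin n → Fin 2) ℂ) :
    Matrix (Fin n → Fin 2) (Fin n → Fin 2) ℂ :=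
  (1 / 4 ^ n : ℂ) • ∑ u : Fin n → Fin 3 → Bool, (magicProd n u * ρ).trace • magicProd n u


noncomputable abbrev s3 : ℂ := ((Real.sqrt 3 : ℝ) : ℂ)

lemma magic_eq (u : Fin 3 → ℝ) : magic u =
    !![1/2 * (1 + (u 2 : ℂ) / s3), 1/(2*s3) * ((u 0 : ℂ) - Complex.I * (u 1 : ℂ));
       1/(2*s3) * ((u 0 : ℂ) + Complex.I * (u 1 : ℂ)), 1/2 * (1 - (u 2 : ℂ) / s3)] := by
  ext a b
  fin_cases a <;> fin_cases b <;>
    simp [magic, PX, PY, PZ, Matrix.one_apply, Matrix.smul_apply, Matrix.add_apply] <;> ring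

lemma tr0 (u : Fin 3 → ℝ) : (pauli 0 * magic u).trace = 1 := by
  have hne : s3 ≠ 0 := by simp [Complex.ofReal_ne_zero, Real.sqrt_ne_zero']
  rw [magic_eq]
  simp [pauli, Matrix.trace_fin_two, Matrix.mul_apply, Fin.sum_univ_two]
  field_simp
  ring

lemma tr1 (u : Fin 3 → ℝ) : (pauli 1 * magic u).trace = (u 0 : ℂ) / s3 := by
  rw [magic_eq]
  simp [pauli, PX, Matrix.trace_fin_two, Matrix.mul_apply, Fin.sum_univ_two]
  ring

lemma tr2 (u : Fin 3 → ℝ) : (pauli 2 * magic u).trace = (u 1 : ℂ) / s3 := by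
  rw [magic_eq]
  simp [pauli, PY, Matrix.trace_fin_two, Matrix.mul_apply, Fin.sum_univ_two]
  ring_nf
  rw [Complex.I_sq]
  ring

lemma tr3 (u : Fin 3 → ℝ) : (pauli 3 * magic u).trace = (u 2 : ℂ) / s3 := by
  rw [magic_eq]
  simp [pauli, PZ, Matrix.trace_fin_two, Matrix.mul_apply, Fin.sum_univ_two]
  ring

def e3 : (Bool × Bool × Bool) ≃ (Fin 3 → Bool) where
  toFun b := ![b.1, b.2.1, b.2.2]
  invFun v := (v 0, v 1, v 2)
  left_inv := by decide
  right_inv := by decide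


lemma sum_bool3 {M : Type*} [AddCommMonoid M] (f : (Fin 3 → Bool) → M) :
    ∑ v, f v =
      f ![false, false, false] + f ![false, false, true] + f ![false, true, false] +
      f ![false, true, true] + f ![true, false, false] + f ![true, false, true] +
      f ![true, true, false] + f ![true, true, true] := by
  rw [← e3.sum_comp]
  simp only [Fintype.sum_prod_type, Fintype.sum_bool]
  simp only [e3, Equiv.coe_fn_mk]
  abel


lemma key1 (k : Fin 4) (a b : Fin 2) :
    ∑ v : Fin 3 → Bool,
        (pauli k * magic fun i => bsign (v i)).trace * magic (fun i => bsign (v i)) a b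
      = 4 * (1 / 3 : ℂ) ^ (if k = 0 then (0 : ℕ) else 1) * pauli k a b := by
  have h3 : s3 * s3 = 3 := by
    rw [← Complex.ofReal_mul, Real.mul_self_sqrt (by norm_num)]; norm_num
  have hne : s3 ≠ 0 := by simp [Complex.ofReal_ne_zero, Real.sqrt_ne_zero']
  have hinv : s3⁻¹ ^ 2 = (3 : ℂ)⁻¹ := by rw [inv_pow, sq, h3]
  have hI3 : Complex.I ^ 3 = -Complex.I := by rw [pow_succ, Complex.I_sq]; ring
  rw [sum_bool3]
  fin_cases k <;>
  · simp only [show (⟨0, by omega⟩ : Fin 4) = 0 from rfl, show (⟨1, by omega⟩ : Fin 4) = 1 from rfl,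
      show (⟨2, by omega⟩ : Fin 4) = 2 from rfl, show (⟨3, by omega⟩ : Fin 4) = 3 from rfl,
      tr0, tr1, tr2, tr3]
    fin_cases a <;> fin_cases b <;>
    · simp only [magic_eq, pauli, PX, PY, PZ,
        Matrix.cons_val_zero, Matrix.cons_val_one, Matrix.cons_val_two, Matrix.head_cons,
        Matrix.tail_cons, Matrix.vecHead, Matrix.vecTail, Matrix.cons_val', Matrix.empty_val',
        Matrix.cons_val_fin_one, Matrix.of_apply, Matrix.one_apply, bsign]
      norm_num
      try ring_nf
      try simp only [hinv, hI3]
      try norm_num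
      try simp
      try ring

lemma trace_mul_pi (n : ℕ) (A B : Fin n → Matrix (Fin 2) (Fin 2) ℂ) :
    ((Matrix.of fun x y : Fin n → Fin 2 => ∏ q, A q (x q) (y q)) *
     (Matrix.of fun x y : Fin n → Fin 2 => ∏ q, B q (x q) (y q))).trace
      = ∏ q, (A q * B q).trace := by
  simp only [Matrix.trace, Matrix.diag, Matrix.mul_apply, Matrix.of_apply,
    ← Finset.prod_mul_distrib]
  simp only [← Fintype.sum_prod_type']
  rw [Fintype.prod_sum fun q (p : Fin 2 × Fin 2) => A q p.1 p.2 * B q p.2 p.1]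
  rw [← (Equiv.arrowProdEquivProdArrow (Fin n) (fun _ => Fin 2) (fun _ => Fin 2)).symm.sum_comp]
  rfl

theorem rounding_damps_pauli_strings (n : ℕ)
    (ρ : Matrix (Fin n → Fin 2) (Fin n → Fin 2) ℂ) (P : Fin n → Fin 4) :
    (pauliString n P * roundCh n ρ).trace =
      (1 / 3 : ℂ) ^ (Finset.univ.filter (fun q => P q ≠ 0)).card *
        (pauliString n P * ρ).trace := by
  classical
  set w := (Finset.univ.filter (fun q => P q ≠ 0)).card with hwdef
  have hT : ∀ u : Fin n → Fin 3 → Bool, (pauliString n P * magicProd n u).trace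
      = ∏ q, (pauli (P q) * magic fun i => bsign (u q i)).trace := fun u =>
    trace_mul_pi n (fun q => pauli (P q)) (fun q => magic fun i => bsign (u q i))
  have hMu : ∀ u, (magicProd n u * ρ).trace = ∑ x, ∑ y, magicProd n u x y * ρ y x := by
    intro u; simp [Matrix.trace, Matrix.diag, Matrix.mul_apply]
  have hTρ : (pauliString n P * ρ).trace = ∑ x, ∑ y, pauliString n P x y * ρ y x := by
    simp [Matrix.trace, Matrix.diag, Matrix.mul_apply]
  have hw : ∀ x y : Fin n → Fin 2,
      (∑ u : Fin n → Fin 3 → Bool,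
        (∏ q, (pauli (P q) * magic fun i => bsign (u q i)).trace) * magicProd n u x y)
      = (4 : ℂ) ^ n * (1 / 3 : ℂ) ^ w * pauliString n P x y := by
    intro x y
    have h1 : ∀ u : Fin n → Fin 3 → Bool,
        (∏ q, (pauli (P q) * magic fun i => bsign (u q i)).trace) * magicProd n u x y
        = ∏ q, ((pauli (P q) * magic fun i => bsign (u q i)).trace *
            magic (fun i => bsign (u q i)) (x q) (y q)) := by
      intro u
      rw [show magicProd n u x y = ∏ q, magic (fun i => bsign (u q i)) (x q) (y q) from rfl,
        ← Finset.prod_mul_distrib]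
    rw [Finset.sum_congr rfl fun u _ => h1 u]
    rw [← Fintype.prod_sum fun q (v : Fin 3 → Bool) =>
      (pauli (P q) * magic fun i => bsign (v i)).trace * magic (fun i => bsign (v i)) (x q) (y q)]
    rw [Finset.prod_congr rfl fun q _ => key1 (P q) (x q) (y q)]
    rw [Finset.prod_mul_distrib, Finset.prod_mul_distrib, Finset.prod_const,
      Finset.prod_pow_eq_pow_sum]
    have hcard : ∑ q : Fin n, (if P q = 0 then (0 : ℕ) else 1) = w := by
      rw [hwdef, Finset.card_filter]
      exact Finset.sum_congr rfl fun q _ => by by_cases h : P q = 0 <;> simp [h]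
    rw [hcard]
    simp [Fintype.card_fin, pauliString]
  have key : (∑ u : Fin n → Fin 3 → Bool,
        (magicProd n u * ρ).trace * (pauliString n P * magicProd n u).trace)
      = (4 : ℂ) ^ n * (1 / 3 : ℂ) ^ w * (pauliString n P * ρ).trace := by
    have e1 : ∀ u : Fin n → Fin 3 → Bool,
        (magicProd n u * ρ).trace * (pauliString n P * magicProd n u).trace
        = ∑ x, ∑ y, ((∏ q, (pauli (P q) * magic fun i => bsign (u q i)).trace) *
            magicProd n u x y) * ρ y x := by
      intro u
      rw [hMu u, hT u, Finset.sum_mul]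
      refine Finset.sum_congr rfl fun x _ => ?_
      rw [Finset.sum_mul]
      exact Finset.sum_congr rfl fun y _ => by ring
    rw [Finset.sum_congr rfl fun u _ => e1 u]
    rw [Finset.sum_comm]
    rw [Finset.sum_congr rfl fun x _ => Finset.sum_comm]
    have e2 : ∀ x y : Fin n → Fin 2,
        (∑ u : Fin n → Fin 3 → Bool,
          ((∏ q, (pauli (P q) * magic fun i => bsign (u q i)).trace) * magicProd n u x y) * ρ y x)
        = ((4 : ℂ) ^ n * (1 / 3 : ℂ) ^ w * pauliString n P x y) * ρ y x := by
      intro x y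
      rw [← Finset.sum_mul, hw x y]
    rw [Finset.sum_congr rfl fun x _ => Finset.sum_congr rfl fun y _ => e2 x y]
    rw [hTρ, Finset.mul_sum]
    refine Finset.sum_congr rfl fun x _ => ?_
    rw [Finset.mul_sum]
    exact Finset.sum_congr rfl fun y _ => by ring
  have h4 : (4 : ℂ) ^ n ≠ 0 := pow_ne_zero n (by norm_num)
  rw [roundCh, Matrix.mul_smul, Matrix.trace_smul, Matrix.mul_sum, Matrix.trace_sum]
  simp only [Matrix.mul_smul, Matrix.trace_smul, smul_eq_mul]
  rw [key]
  field_simp
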